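/- Let Γ be a weighted directed graph on a finite nonempty vertex set V with nonnegative weights (w_{ij} ≥ 0 for all i,j). Then every eigenvalue of the normalized Laplace operator Δ lies in {0, 1} if and only if Γ is a directed acyclic graph (contains no directed cycle). -/

import Mathlib

/-- In-degree of vertex `i`: `d_i^in = ∑_j w_{ij}`. -/
noncomputable def din {V : Type*} [Fintype V] (w : V → V → ℝ) (i : V) : ℝ :=
  ∑ j, w i j

/-- The normalized Laplace operator of a weighted directed graph, as a complex matrix. -/
noncomputable def lap {V : Type*} [Fintype V] [DecidableEq V] (w : V → V → ℝ) :
    Matrix V V ℂ :=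
  Matrix.of fun i j =>
    if din w i = 0 then 0
    else (if i = j then 1 else 0) - ((w i j / din w i : ℝ) : ℂ)

/-- Eigenvalues of the normalized Laplacian, with algebraic multiplicity. -/
noncomputable def specL {V : Type*} [Fintype V] [DecidableEq V] (w : V → V → ℝ) :
    Multiset ℂ :=
  (lap w).charpoly.roots

/-- `Γ` has a directed cycle: a sequence `v_0, v_1, …, v_m = v_0` with `m ≥ 2` and
`w_{v_{t+1} v_t} ≠ 0` for all `0 ≤ t < m`. -/
def HasDirCycle {V : Type*} (w : V → V → ℝ) : Prop :=
  ∃ (m : ℕ) (v : ℕ → V), 2 ≤ m ∧ v m = v 0 ∧ ∀ t < m, w (v (t + 1)) (v t) ≠ 0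

open Matrix Polynomial

noncomputable def Kmat {V : Type*} [Fintype V] [DecidableEq V] (w : V → V → ℝ) :
    Matrix V V ℝ :=
  Matrix.of fun i j => if din w i = 0 then 0 else w i j / din w i

section Aux
variable {V : Type*} [Fintype V] [DecidableEq V]

lemma din_nonneg (w : V → V → ℝ) (hpos : ∀ i j, 0 ≤ w i j) (i : V) : 0 ≤ din w i :=
  Finset.sum_nonneg fun j _ => hpos i j

lemma Kmat_nonneg (w : V → V → ℝ) (hpos : ∀ i j, 0 ≤ w i j) (i j : V) : 0 ≤ Kmat w i j := by
  unfold Kmat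
  simp only [Matrix.of_apply]
  split
  · exact le_refl 0
  · exact div_nonneg (hpos i j) (din_nonneg w hpos i)

lemma Kmat_ne_zero {w : V → V → ℝ} {i j : V} (h : Kmat w i j ≠ 0) : w i j ≠ 0 := by
  intro hw
  apply h
  unfold Kmat
  simp [hw]

/-- entries of powers of an entrywise-nonnegative matrix are nonnegative -/
lemma pow_entries_nonneg (K : Matrix V V ℝ) (h : ∀ i j, 0 ≤ K i j) (k : ℕ) :
    ∀ i j, 0 ≤ (K ^ k) i j := by
  induction k with
  | zero =>
    intro i j
    simp only [pow_zero, Matrix.one_apply]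
    split <;> norm_num
  | succ k ih =>
    intro i j
    rw [pow_succ, Matrix.mul_apply]
    exact Finset.sum_nonneg fun l _ => mul_nonneg (ih i l) (h l j)

/-- if a diagonal entry of a nonnegative matrix is positive, so is it for all powers' lower bound -/
lemma pow_diag_pos (K : Matrix V V ℝ) (h : ∀ i j, 0 ≤ K i j) {i : V} (hi : 0 < K i i) (k : ℕ) :
    0 < (K ^ k) i i := by
  induction k with
  | zero => simp
  | succ k ih =>
    rw [pow_succ, Matrix.mul_apply]
    have : 0 < (K ^ k) i i * K i i := mul_pos ih hi
    refine lt_of_lt_of_le this ?_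
    refine Finset.single_le_sum (fun l _ => mul_nonneg (pow_entries_nonneg K h k i l) (h l i))
      (Finset.mem_univ i)

/-- walk extraction from nonzero entries of powers -/
lemma walk_of_pow_ne_zero (K : Matrix V V ℝ) :
    ∀ (k : ℕ) (i j : V), (K ^ k) i j ≠ 0 →
      ∃ v : ℕ → V, v 0 = j ∧ v k = i ∧ ∀ t < k, K (v (t + 1)) (v t) ≠ 0 := by
  intro k
  induction k with
  | zero =>
    intro i j h
    simp only [pow_zero, Matrix.one_apply, ne_eq, ite_eq_right_iff, Classical.not_imp] at h
    exact ⟨fun _ => j, rfl, h.1.symm, fun t ht => absurd ht (Nat.not_lt_zero t)⟩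
  | succ k ih =>
    intro i j h
    rw [pow_succ', Matrix.mul_apply] at h
    obtain ⟨l, -, hl⟩ := Finset.exists_ne_zero_of_sum_ne_zero h
    have h1 : K i l ≠ 0 := left_ne_zero_of_mul hl
    have h2 : (K ^ k) l j ≠ 0 := right_ne_zero_of_mul hl
    obtain ⟨v, hv0, hvk, hstep⟩ := ih l j h2
    refine ⟨fun t => if t = k + 1 then i else v t, ?_, ?_, ?_⟩
    · simp [hv0]
    · simp
    · intro t ht
      rcases Nat.lt_succ_iff_lt_or_eq.mp ht with ht' | rfl
      · have h1' : t + 1 ≠ k + 1 := by omega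
        have h2' : t ≠ k + 1 := by omega
        have h3' : t ≠ k := by omega
        simpa [h1', h2', h3'] using hstep t ht'
      · have h2' : t ≠ t + 1 := by omega
        simpa [h2', hvk] using h1

lemma no_cycle_pow_card (w : V → V → ℝ) (hloop : ∀ i, w i i = 0) (hnc : ¬ HasDirCycle w) :
    Kmat w ^ Fintype.card V = 0 := by
  set n := Fintype.card V
  ext i j
  rw [Matrix.zero_apply]
  by_contra h
  obtain ⟨v, hv0, hvn, hstep⟩ := walk_of_pow_ne_zero (Kmat w) n i j h
  -- pigeonhole on v restricted to Fin (n+1)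
  have hcard : Fintype.card V < Fintype.card (Fin (n + 1)) := by simp [n]
  obtain ⟨a, b, hab, heq⟩ := Fintype.exists_ne_map_eq_of_card_lt
    (fun t : Fin (n + 1) => v t) hcard
  wlog hlt : (a : ℕ) < (b : ℕ) generalizing a b
  · have hne : (a : ℕ) ≠ (b : ℕ) := fun hc => hab (Fin.val_injective hc)
    exact this b a hab.symm heq.symm (by omega)
  apply hnc
  set s := (a : ℕ); set t := (b : ℕ)
  refine ⟨t - s, fun r => v (s + r), ?_, ?_, ?_⟩
  · -- 2 ≤ t - s
    rcases Nat.lt_or_ge (t - s) 2 with h2 | h2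
    · exfalso
      have h1 : t - s = 1 := by omega
      have := hstep s (by omega)
      apply Kmat_ne_zero this
      have : v (s + 1) = v s := by
        have : s + 1 = t := by omega
        rw [this]; exact heq.symm
      rw [this]
      exact hloop (v s)
    · exact h2
  · show v (s + (t - s)) = v (s + 0)
    have h1 : s + (t - s) = t := by omega
    rw [h1, Nat.add_zero]
    exact heq.symm
  · intro r hr
    have : s + r < n := by omega
    have := hstep (s + r) this
    exact Kmat_ne_zero (by simpa [Nat.add_assoc] using this)


lemma isRoot_charpoly_iff (M : Matrix V V ℂ) (x : ℂ) :
    M.charpoly.IsRoot x ↔ ∃ v, v ≠ 0 ∧ M.mulVec v = x • v := by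
  have h1 : M.charpoly.eval x = (Matrix.scalar V x - M).det := by
    rw [Matrix.charpoly, eval_det, matPolyEquiv_charmatrix, eval_sub, eval_X, eval_C]
  have hs : ∀ v : V → ℂ, (Matrix.scalar V x - M).mulVec v = x • v - M.mulVec v := by
    intro v
    rw [Matrix.sub_mulVec]
    congr 1
    ext i
    rw [Matrix.scalar_apply, Matrix.mulVec_diagonal]
    simp
  rw [Polynomial.IsRoot, h1, ← Matrix.exists_mulVec_eq_zero_iff]
  constructor
  · rintro ⟨v, hv, hmv⟩
    rw [hs, sub_eq_zero] at hmv
    exact ⟨v, hv, hmv.symm⟩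
  · rintro ⟨v, hv, hmv⟩
    exact ⟨v, hv, by rw [hs, hmv, sub_self]⟩

lemma mulVec_pow_eig (M : Matrix V V ℂ) (c : ℂ) (v : V → ℂ) (h : M.mulVec v = c • v) (k : ℕ) :
    (M ^ k).mulVec v = c ^ k • v := by
  induction k with
  | zero => simp
  | succ k ih =>
    rw [pow_succ', ← Matrix.mulVec_mulVec, ih, Matrix.mulVec_smul, h, smul_smul, ← pow_succ]

lemma multiset_sum_count_one (s : Multiset ℂ) (h : ∀ x ∈ s, x = 0 ∨ x = 1) :
    s.sum = (s.count 1 : ℂ) := by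
  induction s using Multiset.induction with
  | empty => simp
  | cons a t ih =>
    rw [Multiset.sum_cons, Multiset.count_cons,
      ih fun x hx => h x (Multiset.mem_cons_of_mem hx)]
    rcases h a (Multiset.mem_cons_self a t) with rfl | rfl
    · norm_num
    · simp [add_comm]


lemma charpoly_eq_X_pow_of_roots_zero (M : Matrix V V ℂ)
    (h : ∀ μ ∈ M.charpoly.roots, μ = 0) :
    M.charpoly = X ^ Fintype.card V := by
  have hmon := M.charpoly_monic
  have hsp : M.charpoly.Splits := IsAlgClosed.splits _
  have hcard : M.charpoly.roots.card = Fintype.card V := by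
    rw [Polynomial.splits_iff_card_roots.mp hsp, Matrix.charpoly_natDegree_eq_dim]
  calc M.charpoly = (M.charpoly.roots.map fun a => X - C a).prod :=
        hsp.eq_prod_roots_of_monic hmon
    _ = (M.charpoly.roots.map fun _ => (X : ℂ[X])).prod := by
        apply congrArg
        exact Multiset.map_congr rfl fun x hx => by rw [h x hx, map_zero, sub_zero]
    _ = X ^ Fintype.card V := by
        rw [Multiset.map_const', Multiset.prod_replicate, hcard]

lemma pow_card_eq_zero_of_roots (M : Matrix V V ℂ)
    (h : ∀ μ ∈ M.charpoly.roots, μ = 0) :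
    M ^ Fintype.card V = 0 := by
  have hCH := Matrix.aeval_self_charpoly M
  rw [charpoly_eq_X_pow_of_roots_zero M h] at hCH
  simpa using hCH


lemma Kmat_row_zero {w : V → V → ℝ} {i : V} (h : din w i = 0) (j : V) : Kmat w i j = 0 := by
  simp [Kmat, h]

lemma lap_mulVec (w : V → V → ℝ) (v : V → ℂ) (i : V) :
    ((lap w).mulVec v) i
      = (if din w i = 0 then 0 else v i)
        - ((Complex.ofRealHom.mapMatrix (Kmat w)).mulVec v) i := by
  have hone : ∑ j, (if i = j then (1 : ℂ) else 0) * v j = v i := by simp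
  by_cases h : din w i = 0
  · have h1 : ∀ j, lap w i j = 0 := fun j => by simp [lap, h]
    have h2 : ∀ j, (Complex.ofRealHom.mapMatrix (Kmat w)) i j = 0 := fun j => by
      simp [RingHom.mapMatrix_apply, Matrix.map_apply, Kmat_row_zero h]
    simp [Matrix.mulVec, dotProduct, h1, h2, h]
  · have h1 : ∀ j, lap w i j
        = (if i = j then (1 : ℂ) else 0) - (Complex.ofRealHom.mapMatrix (Kmat w)) i j := by
      intro j
      simp [lap, Kmat, h, RingHom.mapMatrix_apply, Matrix.map_apply]
    simp only [Matrix.mulVec, dotProduct, h1, sub_mul, Finset.sum_sub_distrib, if_neg h, hone]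

lemma bridgeA (w : V → V → ℝ) (lam : ℂ) (hl : lam ≠ 0) (v : V → ℂ)
    (hv : (lap w).mulVec v = lam • v) :
    (Complex.ofRealHom.mapMatrix (Kmat w)).mulVec v = (1 - lam) • v := by
  set Kc := Complex.ofRealHom.mapMatrix (Kmat w) with hKc
  have hrow0 : ∀ i, din w i = 0 → (Kc.mulVec v) i = 0 := by
    intro i h
    have h2 : ∀ j, Kc i j = 0 := fun j => by
      simp [hKc, RingHom.mapMatrix_apply, Matrix.map_apply, Kmat_row_zero h]
    simp [Matrix.mulVec, dotProduct, h2]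
  funext i
  have hi := congrFun hv i
  rw [lap_mulVec] at hi
  by_cases h : din w i = 0
  · have hvi : v i = 0 := by
      rw [if_pos h, hrow0 i h, sub_zero] at hi
      have : lam * v i = 0 := by simpa using hi.symm
      rcases mul_eq_zero.mp this with h' | h'
      · exact absurd h' hl
      · exact h'
    simp [Pi.smul_apply, hrow0 i h, hvi]
  · rw [if_neg h] at hi
    have hi' : v i - Kc.mulVec v i = lam * v i := by simpa [hKc] using hi
    have : Kc.mulVec v i = (1 - lam) * v i := by linear_combination -hi'
    simpa using this

lemma bridgeB (w : V → V → ℝ) (mu : ℂ) (hm : mu ≠ 0) (v : V → ℂ)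
    (hv : (Complex.ofRealHom.mapMatrix (Kmat w)).mulVec v = mu • v) :
    (lap w).mulVec v = (1 - mu) • v := by
  set Kc := Complex.ofRealHom.mapMatrix (Kmat w) with hKc
  have hrow0 : ∀ i, din w i = 0 → (Kc.mulVec v) i = 0 := by
    intro i h
    have h2 : ∀ j, Kc i j = 0 := fun j => by
      simp [hKc, RingHom.mapMatrix_apply, Matrix.map_apply, Kmat_row_zero h]
    simp [Matrix.mulVec, dotProduct, h2]
  funext i
  have hi := congrFun hv i
  rw [lap_mulVec]
  by_cases h : din w i = 0
  · have hvi : v i = 0 := by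
      rw [hrow0 i h] at hi
      have : mu * v i = 0 := by simpa using hi.symm
      rcases mul_eq_zero.mp this with h' | h'
      · exact absurd h' hm
      · exact h'
    rw [if_pos h, show (Complex.ofRealHom.mapMatrix (Kmat w) *ᵥ v) i = 0 from hrow0 i h]
    simp [hvi]
  · rw [if_neg h]
    have hi' : Kc.mulVec v i = mu * v i := by simpa using hi
    have : v i - Kc.mulVec v i = (1 - mu) * v i := by linear_combination -hi'
    simpa [hKc] using this

end Aux

/-- for a graph with nonnegative weights, every eigenvalue of the normalized
Laplace operator lies in `{0, 1}` if and only if the graph is directed acyclic. -/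
theorem spec_zero_one_iff_dag {V : Type*} [Fintype V] [DecidableEq V] [Nonempty V]
    (w : V → V → ℝ) (hloop : ∀ i, w i i = 0) (hpos : ∀ i j, 0 ≤ w i j) :
    (∀ lam ∈ specL w, lam = 0 ∨ lam = 1) ↔ ¬ HasDirCycle w := by
  classical
  have hKnn : ∀ i j, 0 ≤ Kmat w i j := Kmat_nonneg w hpos
  set n := Fintype.card V with hn
  set Kc : Matrix V V ℂ := Complex.ofRealHom.mapMatrix (Kmat w) with hKcdef
  have hKcn_of : Kmat w ^ n = 0 → Kc ^ n = 0 := by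
    intro h
    rw [hKcdef, ← map_pow, h, map_zero]
  constructor
  · intro hspec hcyc
    obtain ⟨m, cv, hm2, hcm, hcstep⟩ := hcyc
    have hstep_pos : ∀ t < m, 0 < Kmat w (cv (t + 1)) (cv t) := by
      intro t ht
      have hw : 0 < w (cv (t + 1)) (cv t) := lt_of_le_of_ne (hpos _ _) (Ne.symm (hcstep t ht))
      have hd : 0 < din w (cv (t + 1)) :=
        lt_of_lt_of_le hw (Finset.single_le_sum (fun j _ => hpos _ j) (Finset.mem_univ (cv t)))
      have : Kmat w (cv (t + 1)) (cv t) = w (cv (t + 1)) (cv t) / din w (cv (t + 1)) := by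
        simp [Kmat, hd.ne']
      rw [this]
      exact div_pos hw hd
    have hKm : 0 < (Kmat w ^ m) (cv 0) (cv 0) := by
      have key : ∀ t, t ≤ m → 0 < (Kmat w ^ t) (cv t) (cv 0) := by
        intro t
        induction t with
        | zero => intro _; simp
        | succ t ih =>
          intro hle
          have h1 := ih (le_of_lt (Nat.lt_of_succ_le hle))
          rw [pow_succ', Matrix.mul_apply]
          have h2 : 0 < Kmat w (cv (t + 1)) (cv t) * (Kmat w ^ t) (cv t) (cv 0) :=
            mul_pos (hstep_pos t (Nat.lt_of_succ_le hle)) h1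
          refine lt_of_lt_of_le h2 (Finset.single_le_sum
            (fun l _ => mul_nonneg (hKnn _ l) (pow_entries_nonneg _ hKnn t l _))
            (Finset.mem_univ (cv t)))
      have := key m le_rfl
      rwa [hcm] at this
    have hroots01 : ∀ μ ∈ Kc.charpoly.roots, μ = 0 ∨ μ = 1 := by
      intro μ hμ
      by_cases h0 : μ = 0
      · exact Or.inl h0
      right
      have hr : Kc.charpoly.IsRoot μ := (Polynomial.mem_roots'.mp hμ).2
      obtain ⟨v, hv0, hv⟩ := (isRoot_charpoly_iff Kc μ).mp hr
      have hl := bridgeB w μ h0 v hv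
      have hroot : (1 - μ) ∈ specL w := by
        rw [specL, Polynomial.mem_roots ((lap w).charpoly_monic.ne_zero)]
        exact (isRoot_charpoly_iff (lap w) (1 - μ)).mpr ⟨v, hv0, hl⟩
      rcases hspec _ hroot with h | h
      · linear_combination -h
      · exact absurd (by linear_combination -h) h0
    have htr : Kc.trace = 0 := by
      rw [Matrix.trace]
      apply Finset.sum_eq_zero
      intro i _
      have : Kmat w i i = 0 := by simp [Kmat, hloop i]
      simp [Matrix.diag_apply, hKcdef, RingHom.mapMatrix_apply, Matrix.map_apply, this]
    have hsum := Matrix.trace_eq_sum_roots_charpoly Kc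
    rw [htr, multiset_sum_count_one _ hroots01] at hsum
    have hcount : Multiset.count 1 Kc.charpoly.roots = 0 := by exact_mod_cast hsum.symm
    have hall0 : ∀ μ ∈ Kc.charpoly.roots, μ = 0 := by
      intro μ hμ
      rcases hroots01 μ hμ with h | rfl
      · exact h
      · exact absurd hμ (Multiset.count_eq_zero.mp hcount)
    have hKcn : Kc ^ n = 0 := pow_card_eq_zero_of_roots Kc hall0
    have hKn : Kmat w ^ n = 0 := by
      ext i j
      have h2 : (Complex.ofRealHom.mapMatrix (Kmat w ^ n)) i j = (0 : Matrix V V ℂ) i j := by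
        rw [map_pow]
        rw [← hKcdef, hKcn]
      rw [Matrix.zero_apply]
      have h3 : ((Kmat w ^ n) i j : ℂ) = 0 := by
        simpa [RingHom.mapMatrix_apply, Matrix.map_apply] using h2
      exact_mod_cast h3
    have hP := pow_diag_pos (Kmat w ^ m) (pow_entries_nonneg _ hKnn m) hKm n
    rw [← pow_mul] at hP
    have hzero : Kmat w ^ (m * n) = 0 := by
      rw [mul_comm, pow_mul, hKn, zero_pow (by omega : m ≠ 0)]
    rw [hzero] at hP
    simp at hP
  · intro hnc lam hlam
    by_contra hc
    push_neg at hc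
    obtain ⟨h0, h1⟩ := hc
    have hKn : Kmat w ^ n = 0 := no_cycle_pow_card w hloop hnc
    rw [specL] at hlam
    have hr : (lap w).charpoly.IsRoot lam := (Polynomial.mem_roots'.mp hlam).2
    obtain ⟨v, hv0, hv⟩ := (isRoot_charpoly_iff (lap w) lam).mp hr
    have hKv := bridgeA w lam h0 v hv
    have heig := mulVec_pow_eig Kc (1 - lam) v hKv n
    rw [hKcn_of hKn, Matrix.zero_mulVec] at heig
    have hne : (1 - lam) ^ n ≠ 0 := pow_ne_zero _ (sub_ne_zero.mpr (fun h => h1 h.symm))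
    rcases smul_eq_zero.mp heig.symm with h | h
    · exact hne h
    · exact hv0 h
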